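/- Let θ ∈ (0, π/2) and x ≥ 0. For z > 1 define D(x,z) := (1/(2θ)) · ( ∫_{α=−arctan x}^{θ} ((x·z + cos α)/(z + sin α) − x) dα + ∫_{α=arctan x}^{θ} ((x·z − cos α)/(z + sin α) − x) dα ) and F(x,z) := (1/(2θ)) · ( ∫_{α=−arctan x}^{θ} ((x·z + cos α)/(z + sin α) − x)² dα + ∫_{α=arctan x}^{θ} ((x·z − cos α)/(z + sin α) − x)² dα ). Then lim_{z→∞} z² · ( F(x,z) − D(x,z)² ) = (1/(2θ²)) · ( (x²+1)·θ² − 2x²·cos²θ − (x²−1)·θ·sin θ·cos θ ). -/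

import Mathlib

open Real Filter Set intervalIntegral

/-- The conditional expected one-step increment of the slope process in the
directional growth model. -/
noncomputable def growthDrift (θ x z : ℝ) : ℝ :=
  (1 / (2 * θ)) *
    ((∫ α in (-(Real.arctan x))..θ, ((x * z + Real.cos α) / (z + Real.sin α) - x)) +
     (∫ α in (Real.arctan x)..θ, ((x * z - Real.cos α) / (z + Real.sin α) - x)))

/-- The conditional second moment of the one-step increment of the slope process in
the directional growth model. -/
noncomputable def growthSecondMoment (θ x z : ℝ) : ℝ :=
  (1 / (2 * θ)) *
    ((∫ α in (-(Real.arctan x))..θ, ((x * z + Real.cos α) / (z + Real.sin α) - x) ^ 2) +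
     (∫ α in (Real.arctan x)..θ, ((x * z - Real.cos α) / (z + Real.sin α) - x) ^ 2))

namespace Stmt3Aux

lemma tendsto_ratio (s : ℝ) : Tendsto (fun z : ℝ => z / (z + s)) atTop (nhds 1) := by
  have h1 : Tendsto (fun z : ℝ => s / (z + s)) atTop (nhds 0) :=
    Filter.Tendsto.div_atTop tendsto_const_nhds (tendsto_atTop_add_const_right _ s tendsto_id)
  have h2 : Tendsto (fun z : ℝ => 1 - s / (z + s)) atTop (nhds 1) := by
    simpa using tendsto_const_nhds.sub h1
  refine h2.congr' ?_
  filter_upwards [eventually_gt_atTop (|s|)] with z hz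
  have hzs : z + s ≠ 0 := by
    have h := neg_abs_le s
    have h2 := abs_nonneg s
    nlinarith
  field_simp
  ring

lemma tendsto_int (g : ℝ → ℝ) (hg : Continuous g) (C : ℝ) (hb : ∀ α, |g α| ≤ C)
    (u v : ℝ) (n : ℕ) :
    Tendsto (fun z : ℝ => ∫ α in u..v, (z * g α / (z + Real.sin α)) ^ n) atTop
      (nhds (∫ α in u..v, (g α) ^ n)) := by
  have hC : 0 ≤ C := le_trans (abs_nonneg (g 0)) (hb 0)
  apply intervalIntegral.tendsto_integral_filter_of_dominated_convergence (fun _ => (2 * C) ^ n)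
  · filter_upwards [eventually_ge_atTop (2 : ℝ)] with z hz
    apply Continuous.aestronglyMeasurable
    apply Continuous.pow
    exact (continuous_const.mul hg).div (continuous_const.add Real.continuous_sin)
      (fun α => by nlinarith [Real.neg_one_le_sin α])
  · filter_upwards [eventually_ge_atTop (2 : ℝ)] with z hz
    refine Filter.Eventually.of_forall (fun α _ => ?_)
    have hpos : (0 : ℝ) < z + Real.sin α := by nlinarith [Real.neg_one_le_sin α]
    have hzn : (0 : ℝ) ≤ z := by linarith
    have key : |z * g α / (z + Real.sin α)| ≤ 2 * C := by
      rw [abs_div, abs_of_pos hpos, div_le_iff₀ hpos, abs_mul, abs_of_nonneg hzn]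
      nlinarith [hb α, abs_nonneg (g α), Real.neg_one_le_sin α]
    rw [Real.norm_eq_abs, abs_pow]
    exact pow_le_pow_left₀ (abs_nonneg _) key n
  · exact intervalIntegrable_const
  · refine Filter.Eventually.of_forall (fun α _ => ?_)
    have h1 : Tendsto (fun z : ℝ => g α * (z / (z + Real.sin α))) atTop (nhds (g α * 1)) :=
      (tendsto_ratio (Real.sin α)).const_mul (g α)
    rw [mul_one] at h1
    exact (h1.congr (fun z => by ring)).pow n

lemma intsq (c u v : ℝ) :
    ∫ α in u..v, (Real.cos α + c * Real.sin α) ^ 2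
      = ((1 + c ^ 2) * v / 2 + (1 - c ^ 2) * (Real.sin v * Real.cos v) / 2 - c * Real.cos v ^ 2)
        - ((1 + c ^ 2) * u / 2 + (1 - c ^ 2) * (Real.sin u * Real.cos u) / 2
            - c * Real.cos u ^ 2) := by
  have hderiv : ∀ t ∈ Set.uIcc u v,
      HasDerivAt (fun α : ℝ => (1 + c ^ 2) * α / 2 + (1 - c ^ 2) * (Real.sin α * Real.cos α) / 2
          - c * Real.cos α ^ 2)
        ((Real.cos t + c * Real.sin t) ^ 2) t := by
    intro t _
    have h1 : HasDerivAt (fun α : ℝ => (1 + c ^ 2) * α / 2) ((1 + c ^ 2) * 1 / 2) t :=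
      ((hasDerivAt_id t).const_mul (1 + c ^ 2)).div_const 2
    have h2 : HasDerivAt (fun α : ℝ => (1 - c ^ 2) * (Real.sin α * Real.cos α) / 2)
        ((1 - c ^ 2) * (Real.cos t * Real.cos t + Real.sin t * (-Real.sin t)) / 2) t :=
      (((Real.hasDerivAt_sin t).mul (Real.hasDerivAt_cos t)).const_mul (1 - c ^ 2)).div_const 2
    have h3 : HasDerivAt (fun α : ℝ => c * Real.cos α ^ 2)
        (c * ((2 : ℕ) * Real.cos t ^ (2 - 1) * (-Real.sin t))) t :=
      ((Real.hasDerivAt_cos t).pow 2).const_mul c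
    have h := (h1.add h2).sub h3
    refine h.congr_deriv ?_
    push_cast
    have htrig := Real.sin_sq_add_cos_sq t
    nlinarith [htrig]
  exact intervalIntegral.integral_eq_sub_of_hasDerivAt hderiv
    (by apply Continuous.intervalIntegrable; continuity)

end Stmt3Aux

theorem stmt_3 (θ x : ℝ) (hθ : θ ∈ Set.Ioo 0 (Real.pi / 2)) (hx : 0 ≤ x) :
    Filter.Tendsto
      (fun z : ℝ => z ^ 2 * (growthSecondMoment θ x z - (growthDrift θ x z) ^ 2))
      Filter.atTop
      (nhds ((1 / (2 * θ ^ 2)) *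
        ((x ^ 2 + 1) * θ ^ 2 - 2 * x ^ 2 * Real.cos θ ^ 2
          - (x ^ 2 - 1) * θ * Real.sin θ * Real.cos θ))) := by
  obtain ⟨hθ0, hθ2⟩ := hθ
  set a := Real.arctan x with ha
  have hθne : θ ≠ 0 := ne_of_gt hθ0
  -- the two integrand functions
  set g1 : ℝ → ℝ := fun α => Real.cos α - x * Real.sin α with hg1
  set g2 : ℝ → ℝ := fun α => -Real.cos α - x * Real.sin α with hg2
  have hg1c : Continuous g1 := by continuity
  have hg2c : Continuous g2 := by continuity
  have hb1 : ∀ α, |g1 α| ≤ 1 + x := by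
    intro α
    simp only [hg1, hg2]
    rw [abs_le]
    constructor <;>
      nlinarith [Real.neg_one_le_sin α, Real.sin_le_one α, Real.neg_one_le_cos α,
        Real.cos_le_one α, mul_le_mul_of_nonneg_left (Real.sin_le_one α) hx,
        mul_le_mul_of_nonneg_left (Real.neg_one_le_sin α) hx]
  have hb2 : ∀ α, |g2 α| ≤ 1 + x := by
    intro α
    simp only [hg1, hg2]
    rw [abs_le]
    constructor <;>
      nlinarith [Real.neg_one_le_sin α, Real.sin_le_one α, Real.neg_one_le_cos α,
        Real.cos_le_one α, mul_le_mul_of_nonneg_left (Real.sin_le_one α) hx,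
        mul_le_mul_of_nonneg_left (Real.neg_one_le_sin α) hx]
  have hsa : Real.sin a = x * Real.cos a := by
    rw [ha, Real.sin_arctan, Real.cos_arctan]; ring
  -- values of the linear integrals
  have hV1 : (∫ α in (-a)..θ, g1 α) = Real.sin θ + x * Real.cos θ := by
    rw [hg1]
    rw [intervalIntegral.integral_sub (g := fun α => x * Real.sin α) (Real.continuous_cos.intervalIntegrable _ _)
      ((continuous_const.mul Real.continuous_sin).intervalIntegrable _ _)]
    rw [integral_cos, intervalIntegral.integral_const_mul, integral_sin, Real.sin_neg,
      Real.cos_neg]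
    linear_combination hsa
  have hV2 : (∫ α in a..θ, g2 α) = -Real.sin θ + x * Real.cos θ := by
    have : (∫ α in a..θ, g2 α) = ∫ α in a..θ, (-Real.cos α - x * Real.sin α) := rfl
    rw [this]
    rw [intervalIntegral.integral_sub (f := fun α => -Real.cos α) (g := fun α => x * Real.sin α) (Real.continuous_cos.neg.intervalIntegrable _ _)
      ((continuous_const.mul Real.continuous_sin).intervalIntegrable _ _)]
    rw [intervalIntegral.integral_neg, integral_cos, intervalIntegral.integral_const_mul,
      integral_sin]
    linear_combination hsa
  -- values of the quadratic integrals
  have hW1 : (∫ α in (-a)..θ, (g1 α) ^ 2)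
      = ((1 + x ^ 2) * θ / 2 + (1 - x ^ 2) * (Real.sin θ * Real.cos θ) / 2 + x * Real.cos θ ^ 2)
        - ((1 + x ^ 2) * (-a) / 2 + (1 - x ^ 2) * (Real.sin (-a) * Real.cos (-a)) / 2
            + x * Real.cos (-a) ^ 2) := by
    have hcongr : (∫ α in (-a)..θ, (g1 α) ^ 2)
        = ∫ α in (-a)..θ, (Real.cos α + (-x) * Real.sin α) ^ 2 :=
      intervalIntegral.integral_congr (fun α _ => by rw [hg1]; ring)
    rw [hcongr, Stmt3Aux.intsq]
    ring
  have hW2 : (∫ α in a..θ, (g2 α) ^ 2)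
      = ((1 + x ^ 2) * θ / 2 + (1 - x ^ 2) * (Real.sin θ * Real.cos θ) / 2 - x * Real.cos θ ^ 2)
        - ((1 + x ^ 2) * a / 2 + (1 - x ^ 2) * (Real.sin a * Real.cos a) / 2
            - x * Real.cos a ^ 2) := by
    have hcongr : (∫ α in a..θ, (g2 α) ^ 2)
        = ∫ α in a..θ, (Real.cos α + x * Real.sin α) ^ 2 :=
      intervalIntegral.integral_congr (fun α _ => by rw [hg2]; ring)
    rw [hcongr, Stmt3Aux.intsq]
  -- limit of z * drift
  have hA : Tendsto (fun z : ℝ => ∫ α in (-a)..θ, z * g1 α / (z + Real.sin α)) atTop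
      (nhds (Real.sin θ + x * Real.cos θ)) := by
    have h := Stmt3Aux.tendsto_int g1 hg1c (1 + x) hb1 (-a) θ 1
    simp only [pow_one] at h
    rwa [hV1] at h
  have hB : Tendsto (fun z : ℝ => ∫ α in a..θ, z * g2 α / (z + Real.sin α)) atTop
      (nhds (-Real.sin θ + x * Real.cos θ)) := by
    have h := Stmt3Aux.tendsto_int g2 hg2c (1 + x) hb2 a θ 1
    simp only [pow_one] at h
    rwa [hV2] at h
  have hA2 : Tendsto (fun z : ℝ => ∫ α in (-a)..θ, (z * g1 α / (z + Real.sin α)) ^ 2) atTop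
      (nhds (∫ α in (-a)..θ, (g1 α) ^ 2)) :=
    Stmt3Aux.tendsto_int g1 hg1c (1 + x) hb1 (-a) θ 2
  have hB2 : Tendsto (fun z : ℝ => ∫ α in a..θ, (z * g2 α / (z + Real.sin α)) ^ 2) atTop
      (nhds (∫ α in a..θ, (g2 α) ^ 2)) :=
    Stmt3Aux.tendsto_int g2 hg2c (1 + x) hb2 a θ 2
  -- identification of z * growthDrift with the rewritten integrals, eventually
  have keyD : (fun z : ℝ => z * growthDrift θ x z) =ᶠ[atTop]
      (fun z : ℝ => (1 / (2 * θ)) *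
        ((∫ α in (-a)..θ, z * g1 α / (z + Real.sin α))
          + (∫ α in a..θ, z * g2 α / (z + Real.sin α)))) := by
    filter_upwards [eventually_gt_atTop (1 : ℝ)] with z hz
    have hpos : ∀ α : ℝ, 0 < z + Real.sin α := fun α => by nlinarith [Real.neg_one_le_sin α]
    have h1 : (∫ α in (-a)..θ, z * ((x * z + Real.cos α) / (z + Real.sin α) - x))
        = ∫ α in (-a)..θ, z * g1 α / (z + Real.sin α) := by
      refine intervalIntegral.integral_congr (fun α _ => ?_)
      have hne := (hpos α).ne'
      have e : (x * z + Real.cos α) / (z + Real.sin α) - x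
          = (Real.cos α - x * Real.sin α) / (z + Real.sin α) := by
        field_simp
        ring
      rw [hg1, e]; ring
    have h2 : (∫ α in a..θ, z * ((x * z - Real.cos α) / (z + Real.sin α) - x))
        = ∫ α in a..θ, z * g2 α / (z + Real.sin α) := by
      refine intervalIntegral.integral_congr (fun α _ => ?_)
      have hne := (hpos α).ne'
      have e : (x * z - Real.cos α) / (z + Real.sin α) - x
          = (-Real.cos α - x * Real.sin α) / (z + Real.sin α) := by
        field_simp
        ring
      rw [hg2, e]; ring
    calc z * growthDrift θ x z
        = (1 / (2 * θ)) *
          ((∫ α in (-a)..θ, z * ((x * z + Real.cos α) / (z + Real.sin α) - x))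
            + (∫ α in a..θ, z * ((x * z - Real.cos α) / (z + Real.sin α) - x))) := by
          simp only [growthDrift, intervalIntegral.integral_const_mul]; ring
      _ = _ := by rw [h1, h2]
  have keyF : (fun z : ℝ => z ^ 2 * growthSecondMoment θ x z) =ᶠ[atTop]
      (fun z : ℝ => (1 / (2 * θ)) *
        ((∫ α in (-a)..θ, (z * g1 α / (z + Real.sin α)) ^ 2)
          + (∫ α in a..θ, (z * g2 α / (z + Real.sin α)) ^ 2))) := by
    filter_upwards [eventually_gt_atTop (1 : ℝ)] with z hz
    have hpos : ∀ α : ℝ, 0 < z + Real.sin α := fun α => by nlinarith [Real.neg_one_le_sin α]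
    have h1 : (∫ α in (-a)..θ, z ^ 2 * ((x * z + Real.cos α) / (z + Real.sin α) - x) ^ 2)
        = ∫ α in (-a)..θ, (z * g1 α / (z + Real.sin α)) ^ 2 := by
      refine intervalIntegral.integral_congr (fun α _ => ?_)
      have hne := (hpos α).ne'
      have e : (x * z + Real.cos α) / (z + Real.sin α) - x
          = (Real.cos α - x * Real.sin α) / (z + Real.sin α) := by
        field_simp
        ring
      rw [hg1, e]; ring
    have h2 : (∫ α in a..θ, z ^ 2 * ((x * z - Real.cos α) / (z + Real.sin α) - x) ^ 2)
        = ∫ α in a..θ, (z * g2 α / (z + Real.sin α)) ^ 2 := by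
      refine intervalIntegral.integral_congr (fun α _ => ?_)
      have hne := (hpos α).ne'
      have e : (x * z - Real.cos α) / (z + Real.sin α) - x
          = (-Real.cos α - x * Real.sin α) / (z + Real.sin α) := by
        field_simp
        ring
      rw [hg2, e]; ring
    calc z ^ 2 * growthSecondMoment θ x z
        = (1 / (2 * θ)) *
          ((∫ α in (-a)..θ, z ^ 2 * ((x * z + Real.cos α) / (z + Real.sin α) - x) ^ 2)
            + (∫ α in a..θ, z ^ 2 * ((x * z - Real.cos α) / (z + Real.sin α) - x) ^ 2)) := by
          simp only [growthSecondMoment, intervalIntegral.integral_const_mul]; ring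
      _ = _ := by rw [h1, h2]
  -- combined limits
  have hL1 : Tendsto (fun z : ℝ => z * growthDrift θ x z) atTop
      (nhds ((1 / (2 * θ)) * ((Real.sin θ + x * Real.cos θ) + (-Real.sin θ + x * Real.cos θ)))) :=
    ((hA.add hB).const_mul _).congr' keyD.symm
  have hL2 : Tendsto (fun z : ℝ => z ^ 2 * growthSecondMoment θ x z) atTop
      (nhds ((1 / (2 * θ)) * ((∫ α in (-a)..θ, (g1 α) ^ 2) + (∫ α in a..θ, (g2 α) ^ 2)))) :=
    ((hA2.add hB2).const_mul _).congr' keyF.symm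
  have hfin := hL2.sub (hL1.pow 2)
  have hfun : ∀ z : ℝ, z ^ 2 * growthSecondMoment θ x z - (z * growthDrift θ x z) ^ 2
      = z ^ 2 * (growthSecondMoment θ x z - (growthDrift θ x z) ^ 2) := fun z => by ring
  have hfin2 := hfin.congr hfun
  convert hfin2 using 2
  rw [hW1, hW2, Real.sin_neg, Real.cos_neg]
  field_simp
  ring
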